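/- (The last-stage/first-stage cost relation, equation (26) in the proof of the paper's Theorem 1.) Let ε ≥ 0, c ≥ 0, Φ ≥ 0, and let κ ≥ 0 be such that κQ − AᵀQA is positive semidefinite. Let (ξ₀,w₀), (ξ,w) ∈ ℝⁿ×ℝᵐ and (z₀,u₀), (z,u) ∈ ℝⁿ×ℝᵐ satisfy: ‖(ξ,w) − (z,u)‖_H ≤ 2√(εc), ‖(ξ₀,w₀) − (z₀,u₀)‖_H ≤ 2√(εc), ℓ(z,u) ≤ Φ·ℓ(z₀,u₀), c ≤ ℓ(z₀,u₀), and c ≤ ℓ(ξ₀,w₀). Then ℓ*(Aξ) ≤ κ·(√Φ + √(2ε))²·(1 + √(2ε))²·ℓ(ξ₀,w₀). -/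

import Mathlib

open Matrix

/-- The stage cost `ℓ(x,u) = ½(xᵀQx + uᵀRu)`. -/
noncomputable def stageCost {n m : ℕ} (Q : Matrix (Fin n) (Fin n) ℝ)
    (R : Matrix (Fin m) (Fin m) ℝ) (x : Fin n → ℝ) (u : Fin m → ℝ) : ℝ :=
  (1/2) * (x ⬝ᵥ Q *ᵥ x + u ⬝ᵥ R *ᵥ u)

/-- `ℓ*(x) = ½xᵀQx`, the minimal stage cost for fixed state `x`. -/
noncomputable def minStageCost {n : ℕ} (Q : Matrix (Fin n) (Fin n) ℝ)
    (x : Fin n → ℝ) : ℝ := (1/2) * (x ⬝ᵥ Q *ᵥ x)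

/-- The norm `‖(x,u)‖_H = √(xᵀQx + uᵀRu)`, so `‖(x,u)‖_H² = 2ℓ(x,u)`. -/
noncomputable def hNorm {n m : ℕ} (Q : Matrix (Fin n) (Fin n) ℝ)
    (R : Matrix (Fin m) (Fin m) ℝ) (x : Fin n → ℝ) (u : Fin m → ℝ) : ℝ :=
  Real.sqrt (x ⬝ᵥ Q *ᵥ x + u ⬝ᵥ R *ᵥ u)

lemma qf_nonneg' {n : ℕ} {Q : Matrix (Fin n) (Fin n) ℝ} (hQ : Q.PosSemidef)
    (x : Fin n → ℝ) : 0 ≤ x ⬝ᵥ Q *ᵥ x := by simpa using hQ.dotProduct_mulVec_nonneg x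

lemma qf_symm' {n : ℕ} {Q : Matrix (Fin n) (Fin n) ℝ} (hs : Qᵀ = Q)
    (x y : Fin n → ℝ) : x ⬝ᵥ Q *ᵥ y = y ⬝ᵥ Q *ᵥ x := by
  rw [Matrix.dotProduct_mulVec, ← Matrix.mulVec_transpose, hs, dotProduct_comm]

lemma qf_expand' {n : ℕ} {Q : Matrix (Fin n) (Fin n) ℝ} (hs : Qᵀ = Q)
    (x y : Fin n → ℝ) (t : ℝ) :
    (x + t • y) ⬝ᵥ Q *ᵥ (x + t • y) =
      x ⬝ᵥ Q *ᵥ x + 2 * (x ⬝ᵥ Q *ᵥ y) * t + (y ⬝ᵥ Q *ᵥ y) * (t * t) := by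
  have h := qf_symm' hs y x
  simp only [Matrix.mulVec_add, Matrix.mulVec_smul, dotProduct_add, add_dotProduct,
    dotProduct_smul, smul_dotProduct, smul_eq_mul]
  rw [h]; ring

lemma sq_cs' {a b c : ℝ} (ha : 0 ≤ a) (hc : 0 ≤ c)
    (h : ∀ t : ℝ, 0 ≤ c * (t * t) + 2 * b * t + a) :
    b ≤ Real.sqrt a * Real.sqrt c := by
  have hd := discrim_le_zero h
  rw [discrim] at hd
  have hb2 : b ^ 2 ≤ a * c := by nlinarith
  calc b ≤ |b| := le_abs_self b
    _ = Real.sqrt (b ^ 2) := (Real.sqrt_sq_eq_abs b).symm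
    _ ≤ Real.sqrt (a * c) := Real.sqrt_le_sqrt hb2
    _ = Real.sqrt a * Real.sqrt c := Real.sqrt_mul ha c

lemma hNorm_nonneg {n m : ℕ} (Q : Matrix (Fin n) (Fin n) ℝ)
    (R : Matrix (Fin m) (Fin m) ℝ) (x : Fin n → ℝ) (u : Fin m → ℝ) :
    0 ≤ hNorm Q R x u := Real.sqrt_nonneg _

lemma hNorm_cs {n m : ℕ} {Q : Matrix (Fin n) (Fin n) ℝ}
    {R : Matrix (Fin m) (Fin m) ℝ} (hQ : Q.PosSemidef) (hR : R.PosSemidef)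
    (x y : Fin n → ℝ) (u v : Fin m → ℝ) :
    x ⬝ᵥ Q *ᵥ y + u ⬝ᵥ R *ᵥ v ≤ hNorm Q R x u * hNorm Q R y v := by
  have hQs : Qᵀ = Q := by simpa using hQ.1.eq
  have hRs : Rᵀ = R := by simpa using hR.1.eq
  apply sq_cs'
  · exact add_nonneg (qf_nonneg' hQ x) (qf_nonneg' hR u)
  · exact add_nonneg (qf_nonneg' hQ y) (qf_nonneg' hR v)
  · intro t
    have h := add_nonneg (qf_nonneg' hQ (x + t • y)) (qf_nonneg' hR (u + t • v))
    rw [qf_expand' hQs x y t, qf_expand' hRs u v t] at h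
    nlinarith [h]

lemma hNorm_triangle {n m : ℕ} {Q : Matrix (Fin n) (Fin n) ℝ}
    {R : Matrix (Fin m) (Fin m) ℝ} (hQ : Q.PosSemidef) (hR : R.PosSemidef)
    (x y : Fin n → ℝ) (u v : Fin m → ℝ) :
    hNorm Q R (x + y) (u + v) ≤ hNorm Q R x u + hNorm Q R y v := by
  have hQs : Qᵀ = Q := by simpa using hQ.1.eq
  have hRs : Rᵀ = R := by simpa using hR.1.eq
  have hb := hNorm_cs hQ hR x y u v
  have hx2 : hNorm Q R x u ^ 2 = x ⬝ᵥ Q *ᵥ x + u ⬝ᵥ R *ᵥ u :=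
    Real.sq_sqrt (add_nonneg (qf_nonneg' hQ x) (qf_nonneg' hR u))
  have hy2 : hNorm Q R y v ^ 2 = y ⬝ᵥ Q *ᵥ y + v ⬝ᵥ R *ᵥ v :=
    Real.sq_sqrt (add_nonneg (qf_nonneg' hQ y) (qf_nonneg' hR v))
  have hexp : (x + y) ⬝ᵥ Q *ᵥ (x + y) + (u + v) ⬝ᵥ R *ᵥ (u + v) ≤
      (hNorm Q R x u + hNorm Q R y v) ^ 2 := by
    have h1 := qf_expand' hQs x y 1
    have h2 := qf_expand' hRs u v 1
    simp only [one_smul, mul_one] at h1 h2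
    rw [h1, h2]; nlinarith [hb, hx2, hy2]
  calc hNorm Q R (x + y) (u + v)
      ≤ Real.sqrt ((hNorm Q R x u + hNorm Q R y v) ^ 2) := Real.sqrt_le_sqrt hexp
    _ = hNorm Q R x u + hNorm Q R y v := by
        rw [Real.sqrt_sq (add_nonneg (hNorm_nonneg _ _ _ _) (hNorm_nonneg _ _ _ _))]

lemma hNorm_neg {n m : ℕ} (Q : Matrix (Fin n) (Fin n) ℝ)
    (R : Matrix (Fin m) (Fin m) ℝ) (x : Fin n → ℝ) (u : Fin m → ℝ) :
    hNorm Q R (-x) (-u) = hNorm Q R x u := by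
  simp [hNorm, Matrix.mulVec_neg, dotProduct_neg, neg_dotProduct]

/-- The last-stage/first-stage cost relation (equation (26) in the proof of the
paper's Theorem 1). -/
theorem last_first_stage_cost_relation {n m : ℕ} (hn : 1 ≤ n) (hm : 1 ≤ m)
    (A : Matrix (Fin n) (Fin n) ℝ)
    (Q : Matrix (Fin n) (Fin n) ℝ) (hQ : Q.PosDef)
    (R : Matrix (Fin m) (Fin m) ℝ) (hR : R.PosDef)
    (ε c Φ κ : ℝ) (hε : 0 ≤ ε) (hc : 0 ≤ c) (hΦ : 0 ≤ Φ) (hκ0 : 0 ≤ κ)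
    (hκ : (κ • Q - Aᵀ * Q * A).PosSemidef)
    (ξ₀ ξ z₀ z : Fin n → ℝ) (w₀ w u₀ u : Fin m → ℝ)
    (hnrm : hNorm Q R (ξ - z) (w - u) ≤ 2 * Real.sqrt (ε * c))
    (hnrm0 : hNorm Q R (ξ₀ - z₀) (w₀ - u₀) ≤ 2 * Real.sqrt (ε * c))
    (hΦbound : stageCost Q R z u ≤ Φ * stageCost Q R z₀ u₀)
    (hc1 : c ≤ stageCost Q R z₀ u₀)
    (hc2 : c ≤ stageCost Q R ξ₀ w₀) :
    minStageCost Q (A *ᵥ ξ) ≤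
      κ * (Real.sqrt Φ + Real.sqrt (2 * ε)) ^ 2 * (1 + Real.sqrt (2 * ε)) ^ 2 *
        stageCost Q R ξ₀ w₀ := by
  have hQp := hQ.posSemidef
  have hRp := hR.posSemidef
  set L0 := stageCost Q R ξ₀ w₀ with hL0def
  set L0' := stageCost Q R z₀ u₀ with hL0'def
  have hq0 : ξ₀ ⬝ᵥ Q *ᵥ ξ₀ + w₀ ⬝ᵥ R *ᵥ w₀ = 2 * L0 := by
    rw [hL0def, stageCost]; ring
  have hq0' : z₀ ⬝ᵥ Q *ᵥ z₀ + u₀ ⬝ᵥ R *ᵥ u₀ = 2 * L0' := by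
    rw [hL0'def, stageCost]; ring
  have hL0nn : 0 ≤ L0 := le_trans hc hc2
  have hL0'nn : 0 ≤ L0' := le_trans hc hc1
  -- step 0: ℓ*(Aξ) ≤ ½ κ ξᵀQξ
  have hAQ : (A *ᵥ ξ) ⬝ᵥ Q *ᵥ (A *ᵥ ξ) ≤ κ * (ξ ⬝ᵥ Q *ᵥ ξ) := by
    have h0 := qf_nonneg' hκ ξ
    have heq : ξ ⬝ᵥ (κ • Q - Aᵀ * Q * A) *ᵥ ξ =
        κ * (ξ ⬝ᵥ Q *ᵥ ξ) - (A *ᵥ ξ) ⬝ᵥ Q *ᵥ (A *ᵥ ξ) := by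
      rw [Matrix.sub_mulVec, dotProduct_sub, Matrix.smul_mulVec,
        dotProduct_smul, smul_eq_mul]
      congr 1
      rw [← Matrix.mulVec_mulVec, ← Matrix.mulVec_mulVec,
        Matrix.dotProduct_mulVec ξ Aᵀ, ← Matrix.mulVec_transpose, Matrix.transpose_transpose]
    linarith [heq ▸ h0]
  -- bound the perturbation: 2√(εc) ≤ √(2ε)·√(2L0') and ≤ √(2ε)·√(2L0)
  have hpert : ∀ L : ℝ, 0 ≤ L → c ≤ L →
      2 * Real.sqrt (ε * c) ≤ Real.sqrt (2 * ε) * Real.sqrt (2 * L) := by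
    intro L hL hcL
    have key : 2 * Real.sqrt (ε * c) = Real.sqrt (2 * ε) * Real.sqrt (2 * c) := by
      rw [← Real.sqrt_mul (by linarith : (0:ℝ) ≤ 2 * ε),
        show 2 * ε * (2 * c) = 2 ^ 2 * (ε * c) by ring,
        Real.sqrt_mul (by norm_num : (0:ℝ) ≤ (2:ℝ) ^ 2),
        Real.sqrt_sq (by norm_num : (0:ℝ) ≤ 2)]
    rw [key]
    apply mul_le_mul_of_nonneg_left _ (Real.sqrt_nonneg _)
    exact Real.sqrt_le_sqrt (by linarith)
  -- step 2: √(2L0') ≤ (1+√(2ε))·√(2L0)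
  have hstep2 : Real.sqrt (2 * L0') ≤ (1 + Real.sqrt (2 * ε)) * Real.sqrt (2 * L0) := by
    have htri := hNorm_triangle hQp hRp ξ₀ (z₀ - ξ₀) w₀ (u₀ - w₀)
    have hzz : ξ₀ + (z₀ - ξ₀) = z₀ := by ring
    have hww : w₀ + (u₀ - w₀) = u₀ := by ring
    rw [hzz, hww] at htri
    have hneg : hNorm Q R (z₀ - ξ₀) (u₀ - w₀) = hNorm Q R (ξ₀ - z₀) (w₀ - u₀) := by
      rw [show z₀ - ξ₀ = -(ξ₀ - z₀) by ring, show u₀ - w₀ = -(w₀ - u₀) by ring,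
        hNorm_neg]
    rw [hneg] at htri
    have h1 : hNorm Q R z₀ u₀ = Real.sqrt (2 * L0') := by rw [hNorm, hq0']
    have h2 : hNorm Q R ξ₀ w₀ = Real.sqrt (2 * L0) := by rw [hNorm, hq0]
    rw [h1, h2] at htri
    have := hpert L0 hL0nn hc2
    calc Real.sqrt (2 * L0') ≤ Real.sqrt (2 * L0) + hNorm Q R (ξ₀ - z₀) (w₀ - u₀) := htri
      _ ≤ Real.sqrt (2 * L0) + Real.sqrt (2 * ε) * Real.sqrt (2 * L0) := by linarith
      _ = (1 + Real.sqrt (2 * ε)) * Real.sqrt (2 * L0) := by ring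
  -- step 1: √(ξᵀQξ) ≤ (√Φ+√(2ε))·√(2L0')
  have hstep1 : Real.sqrt (ξ ⬝ᵥ Q *ᵥ ξ) ≤
      (Real.sqrt Φ + Real.sqrt (2 * ε)) * Real.sqrt (2 * L0') := by
    have hmono : Real.sqrt (ξ ⬝ᵥ Q *ᵥ ξ) ≤ hNorm Q R ξ w :=
      Real.sqrt_le_sqrt (by linarith [qf_nonneg' hRp w])
    have htri := hNorm_triangle hQp hRp z (ξ - z) u (w - u)
    have hzz : z + (ξ - z) = ξ := by ring
    have hww : u + (w - u) = w := by ring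
    rw [hzz, hww] at htri
    have hzu : hNorm Q R z u ≤ Real.sqrt Φ * Real.sqrt (2 * L0') := by
      have h2zu : z ⬝ᵥ Q *ᵥ z + u ⬝ᵥ R *ᵥ u = 2 * stageCost Q R z u := by
        rw [stageCost]; ring
      calc hNorm Q R z u = Real.sqrt (2 * stageCost Q R z u) := by rw [hNorm, h2zu]
        _ ≤ Real.sqrt (Φ * (2 * L0')) := Real.sqrt_le_sqrt (by linarith)
        _ = Real.sqrt Φ * Real.sqrt (2 * L0') := Real.sqrt_mul hΦ _
    have hp := hpert L0' hL0'nn hc1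
    calc Real.sqrt (ξ ⬝ᵥ Q *ᵥ ξ) ≤ hNorm Q R ξ w := hmono
      _ ≤ hNorm Q R z u + hNorm Q R (ξ - z) (w - u) := htri
      _ ≤ Real.sqrt Φ * Real.sqrt (2 * L0') + Real.sqrt (2 * ε) * Real.sqrt (2 * L0') := by
          linarith
      _ = (Real.sqrt Φ + Real.sqrt (2 * ε)) * Real.sqrt (2 * L0') := by ring
  -- combine
  set t := Real.sqrt (ξ ⬝ᵥ Q *ᵥ ξ) with htdef
  set B := (Real.sqrt Φ + Real.sqrt (2 * ε)) * ((1 + Real.sqrt (2 * ε)) * Real.sqrt (2 * L0))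
    with hBdef
  have htB : t ≤ B := by
    calc t ≤ (Real.sqrt Φ + Real.sqrt (2 * ε)) * Real.sqrt (2 * L0') := hstep1
      _ ≤ B := by
          rw [hBdef]
          apply mul_le_mul_of_nonneg_left hstep2
          positivity
  have htnn : 0 ≤ t := Real.sqrt_nonneg _
  have ht2 : t ^ 2 = ξ ⬝ᵥ Q *ᵥ ξ := Real.sq_sqrt (qf_nonneg' hQp ξ)
  have hB2 : B ^ 2 = (Real.sqrt Φ + Real.sqrt (2 * ε)) ^ 2 *
      (1 + Real.sqrt (2 * ε)) ^ 2 * (2 * L0) := by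
    rw [hBdef]
    rw [mul_pow, mul_pow, Real.sq_sqrt (by linarith : (0:ℝ) ≤ 2 * L0)]
    ring
  have hqq : ξ ⬝ᵥ Q *ᵥ ξ ≤ (Real.sqrt Φ + Real.sqrt (2 * ε)) ^ 2 *
      (1 + Real.sqrt (2 * ε)) ^ 2 * (2 * L0) := by
    rw [← ht2, ← hB2]
    exact pow_le_pow_left₀ htnn htB 2
  rw [minStageCost]
  nlinarith [hAQ, hqq, hκ0, mul_le_mul_of_nonneg_left hqq hκ0]
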